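/- arXiv:2209.12658 — 2 statements merged into one kernel-verified Lean document; each statement's English description precedes it below -/
import Mathlib

section
/- For real w > 0 and y > 0 and complex z with Re(z) > 0, the generalized Raabe cosine transform ℜ_z(y,w) := (1/2)Γ(2z+1) ∫_0^∞ ((t-iw)^{-(2z+1)} + (t+iw)^{-(2z+1)}) cos(yt) dt satisfies the symmetry w^{2z} ℜ_z(y,w) = y^{2z} ℜ_z(w,y). -/
open Complex MeasureTheory

/-- The generalized Raabe cosine transform `ℜ_z(y,w)`. -/
noncomputable def raabe (z : ℂ) (y w : ℝ) : ℂ :=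
  (1/2) * Complex.Gamma (2*z + 1) *
    ∫ t in Set.Ioi (0:ℝ),
      (((t:ℂ) - Complex.I * w) ^ (-(2*z + 1)) + ((t:ℂ) + Complex.I * w) ^ (-(2*z + 1))) *
        Complex.cos (y * t)

/-- `(r·ζ)^c = r^c · ζ^c` for a positive real `r` and nonzero complex `ζ`. -/
lemma ofReal_mul_cpow' {r : ℝ} (hr : 0 < r) {ζ : ℂ} (hζ : ζ ≠ 0) (c : ℂ) :
    ((r : ℂ) * ζ) ^ c = (r : ℂ) ^ c * ζ ^ c := by
  have hr' : (r : ℂ) ≠ 0 := Complex.ofReal_ne_zero.mpr hr.ne'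
  rw [Complex.cpow_def_of_ne_zero (mul_ne_zero hr' hζ), Complex.log_ofReal_mul hr hζ,
    Complex.ofReal_log hr.le, add_mul, Complex.exp_add,
    ← Complex.cpow_def_of_ne_zero hr', ← Complex.cpow_def_of_ne_zero hζ]

/-- The key substitution `t = a·τ`, showing that `a^(c-1)` times the Raabe-type integral
depends on `a, b` only through the product `a*b`. -/
lemma raabe_key (c : ℂ) {a b : ℝ} (ha : 0 < a) :
    (a:ℂ) ^ (c - 1) *
      ∫ t in Set.Ioi (0:ℝ),
        (((t:ℂ) - Complex.I * a) ^ (-c) + ((t:ℂ) + Complex.I * a) ^ (-c)) *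
          Complex.cos (b * t)
    = ∫ t in Set.Ioi (0:ℝ),
        (((t:ℂ) - Complex.I) ^ (-c) + ((t:ℂ) + Complex.I) ^ (-c)) *
          Complex.cos ((a * b) * t) := by
  have ha' : (a : ℂ) ≠ 0 := Complex.ofReal_ne_zero.mpr ha.ne'
  have subst := integral_comp_mul_left_Ioi
    (fun t : ℝ => (((t:ℂ) - Complex.I * a) ^ (-c) + ((t:ℂ) + Complex.I * a) ^ (-c)) *
      Complex.cos (b * t)) 0 ha
  simp only [mul_zero] at subst
  push_cast at subst
  have hpt : ∀ x : ℝ,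
      (((a:ℂ) * (x:ℂ) - Complex.I * a) ^ (-c) + ((a:ℂ) * (x:ℂ) + Complex.I * a) ^ (-c)) *
        Complex.cos ((b:ℂ) * ((a:ℂ) * (x:ℂ)))
      = (a:ℂ) ^ (-c) *
        ((((x:ℂ) - Complex.I) ^ (-c) + ((x:ℂ) + Complex.I) ^ (-c)) *
          Complex.cos ((a:ℂ) * (b:ℂ) * (x:ℂ))) := by
    intro x
    have h1 : ((a:ℂ) * (x:ℂ) - Complex.I * a) = (a:ℂ) * ((x:ℂ) - Complex.I) := by ring
    have h2 : ((a:ℂ) * (x:ℂ) + Complex.I * a) = (a:ℂ) * ((x:ℂ) + Complex.I) := by ring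
    have hm1 : ((x:ℂ) - Complex.I) ≠ 0 := by
      intro h
      have := congrArg Complex.im h
      simp at this
    have hm2 : ((x:ℂ) + Complex.I) ≠ 0 := by
      intro h
      have := congrArg Complex.im h
      simp at this
    have h3 : (b:ℂ) * ((a:ℂ) * (x:ℂ)) = (a:ℂ) * (b:ℂ) * (x:ℂ) := by ring
    rw [h1, h2, ofReal_mul_cpow' ha hm1, ofReal_mul_cpow' ha hm2, h3]
    ring
  simp only [hpt, integral_const_mul] at subst
  have hEq : (∫ t in Set.Ioi (0:ℝ),
      (((t:ℂ) - Complex.I * a) ^ (-c) + ((t:ℂ) + Complex.I * a) ^ (-c)) *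
        Complex.cos (b * t))
      = (a:ℂ) * ((a:ℂ) ^ (-c) *
        ∫ t in Set.Ioi (0:ℝ),
          (((t:ℂ) - Complex.I) ^ (-c) + ((t:ℂ) + Complex.I) ^ (-c)) *
            Complex.cos ((a * b) * t)) := by
    have h4 := congrArg (fun ξ : ℂ => a • ξ) subst
    beta_reduce at h4
    rw [smul_inv_smul₀ ha.ne'] at h4
    rw [← h4, Complex.real_smul]
  rw [hEq]
  have hpow : (a:ℂ) ^ (c - 1) * ((a:ℂ) * (a:ℂ) ^ (-c)) = 1 := by
    have hcomb : (a:ℂ) ^ (c - 1) * (a:ℂ) ^ (-c) = (a:ℂ) ^ (-1 : ℂ) := by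
      rw [← Complex.cpow_add _ _ ha', show c - 1 + -c = (-1 : ℂ) by ring]
    calc (a:ℂ) ^ (c - 1) * ((a:ℂ) * (a:ℂ) ^ (-c))
        = ((a:ℂ) ^ (c - 1) * (a:ℂ) ^ (-c)) * (a:ℂ) := by ring
      _ = (a:ℂ) ^ (-1 : ℂ) * (a:ℂ) := by rw [hcomb]
      _ = 1 := by rw [Complex.cpow_neg_one]; exact inv_mul_cancel₀ ha'
  calc (a:ℂ) ^ (c - 1) * ((a:ℂ) * ((a:ℂ) ^ (-c) *
        ∫ t in Set.Ioi (0:ℝ),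
          (((t:ℂ) - Complex.I) ^ (-c) + ((t:ℂ) + Complex.I) ^ (-c)) *
            Complex.cos ((a * b) * t)))
      = ((a:ℂ) ^ (c - 1) * ((a:ℂ) * (a:ℂ) ^ (-c))) *
        ∫ t in Set.Ioi (0:ℝ),
          (((t:ℂ) - Complex.I) ^ (-c) + ((t:ℂ) + Complex.I) ^ (-c)) *
            Complex.cos ((a * b) * t) := by ring
    _ = _ := by rw [hpow, one_mul]

theorem stmt_0 (z : ℂ) (hz : 0 < z.re) (y w : ℝ) (hy : 0 < y) (hw : 0 < w) :
    (w:ℂ) ^ (2*z) * raabe z y w = (y:ℂ) ^ (2*z) * raabe z w y := by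
  have h2 : (2*z) = (2*z + 1) - 1 := by ring
  have hkw := raabe_key (2*z+1) hw (b := y)
  have hky := raabe_key (2*z+1) hy (b := w)
  rw [← h2] at hkw hky
  rw [mul_comm (y:ℂ) (w:ℂ)] at hky
  unfold raabe
  linear_combination (1/2) * Complex.Gamma (2*z + 1) * (hkw - hky)
end

section
/- For complex w with Re(w) > 0 and complex z with Re(z) > 0, ∫_0^∞ ((t-iw)^{-(2z+1)} + (t+iw)^{-(2z+1)}) dt = cos(πz)/(z w^{2z}), where complex powers use the principal branch. -/
open Complex MeasureTheory Real Filter Set Topology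

lemma norm_cpow_le' (x s : ℂ) :
    ‖x ^ s‖ ≤ ‖x‖ ^ s.re * Real.exp (π * |s.im|) := by
  refine (Complex.norm_cpow_le x s).trans ?_
  rw [div_le_iff₀ (Real.exp_pos _)]
  have h1 : |x.arg * s.im| ≤ π * |s.im| := by
    rw [abs_mul]
    exact mul_le_mul_of_nonneg_right (Complex.abs_arg_le_pi x) (abs_nonneg _)
  calc ‖x‖ ^ s.re = ‖x‖ ^ s.re * 1 := (mul_one _).symm
    _ ≤ ‖x‖ ^ s.re * (Real.exp (π * |s.im|) * Real.exp (x.arg * s.im)) := by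
        refine mul_le_mul_of_nonneg_left ?_ (Real.rpow_nonneg (norm_nonneg x) _)
        rw [← Real.exp_add]
        refine Real.one_le_exp ?_
        nlinarith [neg_abs_le (x.arg * s.im)]
    _ = _ := by ring

lemma key_int (a : ℂ) (ha : a.im ≠ 0) (z : ℂ) (hz : 0 < z.re) :
    IntegrableOn (fun t : ℝ => ((t:ℂ) + a) ^ (-(2*z + 1))) (Ioi 0) ∧
    ∫ t in Ioi (0:ℝ), ((t:ℂ) + a) ^ (-(2*z + 1)) = a ^ (-(2*z)) / (2*z) := by
  set s : ℂ := -(2*z + 1) with hs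
  have hsre : s.re = -(2*z.re + 1) := by simp [hs]
  have hsre_lt : s.re < -1 := by rw [hsre]; linarith
  have hsre_neg : s.re ≤ 0 := by linarith
  have hmem : ∀ t : ℝ, (t:ℂ) + a ∈ Complex.slitPlane := fun t =>
    Or.inr (by simpa using ha)
  have hne : ∀ t : ℝ, (t:ℂ) + a ≠ 0 := fun t =>
    Complex.slitPlane_ne_zero (hmem t)
  have hcont : Continuous (fun t : ℝ => ((t:ℂ) + a) ^ s) := by
    refine continuous_iff_continuousAt.mpr fun t => ?_
    have hca : ContinuousAt (fun x : ℂ => x ^ s) ((t:ℂ) + a) :=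
      continuousAt_cpow_const (hmem t)
    exact ContinuousAt.comp (f := fun u : ℝ => (u:ℂ) + a) hca
      ((Complex.continuous_ofReal.add continuous_const).continuousAt)
  set T : ℝ := 2*|a.re| + 2 with hT
  have hT0 : (0:ℝ) < T := by positivity
  -- pointwise bound for t > T
  have hbound : ∀ t : ℝ, T < t →
      ‖((t:ℂ) + a) ^ s‖ ≤ (Real.exp (π * |s.im|) * (2:ℝ) ^ (-s.re)) * t ^ s.re := by
    intro t ht
    have ht0 : 0 < t := lt_trans hT0 ht
    have habs : t/2 ≤ ‖(t:ℂ) + a‖ := by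
      have h1 : t/2 ≤ t + a.re := by
        have := abs_nonneg a.re
        have := neg_abs_le a.re
        simp only [hT] at ht
        linarith
      calc t/2 ≤ ((t:ℂ) + a).re := by simpa using h1
        _ ≤ |((t:ℂ) + a).re| := le_abs_self _
        _ ≤ ‖(t:ℂ) + a‖ := Complex.abs_re_le_norm _
    have h2 : ‖(t:ℂ) + a‖ ^ s.re ≤ (t/2) ^ s.re :=
      Real.rpow_le_rpow_of_nonpos (by positivity) habs hsre_neg
    have h3 : (t/2) ^ s.re = t ^ s.re * (2:ℝ) ^ (-s.re) := by
      rw [Real.div_rpow ht0.le (by norm_num), Real.rpow_neg (by norm_num)]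
      ring
    refine (norm_cpow_le' _ _).trans ?_
    calc ‖(t:ℂ) + a‖ ^ s.re * Real.exp (π * |s.im|)
        ≤ (t/2) ^ s.re * Real.exp (π * |s.im|) :=
          mul_le_mul_of_nonneg_right h2 (Real.exp_pos _).le
      _ = (Real.exp (π * |s.im|) * (2:ℝ) ^ (-s.re)) * t ^ s.re := by rw [h3]; ring
  have hint : IntegrableOn (fun t : ℝ => ((t:ℂ) + a) ^ s) (Ioi 0) := by
    have hi1 : IntegrableOn (fun t : ℝ => ((t:ℂ) + a) ^ s) (Ioc 0 T) :=
      hcont.integrableOn_Ioc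
    have hi2 : IntegrableOn (fun t : ℝ => ((t:ℂ) + a) ^ s) (Ioi T) := by
      refine Integrable.mono' (((integrableOn_Ioi_rpow_of_lt hsre_lt hT0).const_mul
        (Real.exp (π * |s.im|) * (2:ℝ) ^ (-s.re)))) ?_ ?_
      · exact (hcont.aestronglyMeasurable).restrict
      · rw [ae_restrict_iff' measurableSet_Ioi]
        exact ae_of_all _ fun t ht => hbound t ht
    exact ((hi1.union hi2).mono_set (fun x hx => by
      rcases le_or_gt x T with h | h
      · exact Or.inl ⟨hx, h⟩
      · exact Or.inr h))
  refine ⟨hint, ?_⟩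
  have h2z : (2*z) ≠ 0 := by
    intro h
    have : (2*z).re = 0 := by rw [h]; simp
    simp at this; linarith
  set F : ℝ → ℂ := fun t => ((t:ℂ) + a) ^ (-(2*z)) / (-(2*z)) with hF
  have hderiv : ∀ t ∈ Ici (0:ℝ), HasDerivAt F (((t:ℂ) + a) ^ s) t := by
    intro t _
    have h1 : HasDerivAt (fun t : ℝ => (t:ℂ) + a) 1 t := by
      simpa using (Complex.ofRealCLM.hasDerivAt (x := t)).add_const a
    have h2 := (((Complex.hasStrictDerivAt_cpow_const (c := -(2*z))
      (hmem t)).hasDerivAt.comp t h1).div_const (-(2*z)))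
    convert h2 using 1
    · rfl
    · rfl
    have hexp : s = -(2*z) - 1 := by rw [hs]; ring
    rw [hexp, mul_one]
    exact (mul_div_cancel_left₀ _ (neg_ne_zero.mpr h2z)).symm
  have htend : Tendsto F atTop (𝓝 0) := by
    have h1 : Tendsto (fun t : ℝ => ((t:ℂ) + a) ^ (-(2*z))) atTop (𝓝 0) := by
      rw [tendsto_zero_iff_norm_tendsto_zero]
      have hb : ∀ᶠ t : ℝ in atTop, ‖((t:ℂ) + a) ^ (-(2*z))‖ ≤
          (Real.exp (π * |(-(2*z)).im|) * (2:ℝ) ^ (2*z.re)) * t ^ (-(2*z.re)) := by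
        filter_upwards [eventually_gt_atTop T] with t ht
        have ht0 : 0 < t := lt_trans hT0 ht
        have habs : t/2 ≤ ‖(t:ℂ) + a‖ := by
          have h1 : t/2 ≤ t + a.re := by
            have := abs_nonneg a.re
            have := neg_abs_le a.re
            simp only [hT] at ht
            linarith
          calc t/2 ≤ ((t:ℂ) + a).re := by simpa using h1
            _ ≤ |((t:ℂ) + a).re| := le_abs_self _
            _ ≤ ‖(t:ℂ) + a‖ := Complex.abs_re_le_norm _
        have hre : (-(2*z)).re = -(2*z.re) := by simp
        have h2 : ‖(t:ℂ) + a‖ ^ (-(2*z)).re ≤ (t/2) ^ (-(2*z.re)) := by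
          rw [hre] at *
          exact Real.rpow_le_rpow_of_nonpos (by positivity) habs (by linarith)
        have h3 : (t/2) ^ (-(2*z.re)) = t ^ (-(2*z.re)) * (2:ℝ) ^ (2*z.re) := by
          rw [Real.div_rpow ht0.le (by norm_num), div_eq_mul_inv,
            ← Real.rpow_neg (by norm_num), neg_neg]
        refine (norm_cpow_le' _ _).trans ?_
        calc ‖(t:ℂ) + a‖ ^ (-(2*z)).re * Real.exp (π * |(-(2*z)).im|)
            ≤ (t/2) ^ (-(2*z.re)) * Real.exp (π * |(-(2*z)).im|) :=
              mul_le_mul_of_nonneg_right h2 (Real.exp_pos _).le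
          _ = _ := by rw [h3]; ring
      have hlim : Tendsto (fun t : ℝ =>
          (Real.exp (π * |(-(2*z)).im|) * (2:ℝ) ^ (2*z.re)) * t ^ (-(2*z.re)))
          atTop (𝓝 0) := by
        have := (tendsto_rpow_neg_atTop (y := 2*z.re) (by linarith)).const_mul
          (Real.exp (π * |(-(2*z)).im|) * (2:ℝ) ^ (2*z.re))
        simpa using this
      exact squeeze_zero' (Eventually.of_forall fun t => norm_nonneg _) hb hlim
    have h2' := h1.div_const (-(2*z))
    rw [zero_div] at h2'
    exact h2'
  have := integral_Ioi_of_hasDerivAt_of_tendsto' hderiv hint htend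
  rw [this]
  simp only [hF, Complex.ofReal_zero, zero_add, zero_sub, div_neg, neg_neg]

theorem stmt_2 (w z : ℂ) (hw : 0 < w.re) (hz : 0 < z.re) :
    ∫ t in Set.Ioi (0:ℝ),
        (((t:ℂ) - Complex.I * w) ^ (-(2*z + 1)) + ((t:ℂ) + Complex.I * w) ^ (-(2*z + 1))) =
      Complex.cos (π * z) / (z * w ^ (2*z)) := by
  have hzne : z ≠ 0 := fun h => by simp [h] at hz
  have hwne : w ≠ 0 := fun h => by simp [h] at hw
  have hIw : Complex.I * w ≠ 0 := mul_ne_zero Complex.I_ne_zero hwne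
  have him1 : (-(Complex.I * w)).im ≠ 0 := by simpa using hw.ne'
  have him2 : (Complex.I * w).im ≠ 0 := by simpa using hw.ne'
  have h1 := key_int (-(Complex.I * w)) him1 z hz
  have h2 := key_int (Complex.I * w) him2 z hz
  have hrw : ∀ t : ℝ, ((t:ℂ) - Complex.I * w) ^ (-(2*z + 1)) =
      ((t:ℂ) + -(Complex.I * w)) ^ (-(2*z + 1)) := fun t => by rw [sub_eq_add_neg]
  simp_rw [hrw]
  rw [MeasureTheory.integral_add h1.1 h2.1, h1.2, h2.2]
  -- now pure algebra
  have hargw : |w.arg| < π/2 := Complex.abs_arg_lt_pi_div_two_iff.mpr (Or.inl hw)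
  have hpi := Real.pi_pos
  have hlog1 : Complex.log (-(Complex.I * w)) = -(↑(π/2) * Complex.I) + Complex.log w := by
    rw [neg_mul_eq_neg_mul, Complex.log_mul (neg_ne_zero.mpr Complex.I_ne_zero) hwne ?_,
      Complex.log_neg_I]
    · push_cast; ring_nf
    · rw [Complex.arg_neg_I]
      constructor
      · cases abs_lt.mp hargw; linarith
      · cases abs_lt.mp hargw; linarith
  have hlog2 : Complex.log (Complex.I * w) = ↑(π/2) * Complex.I + Complex.log w := by
    rw [Complex.log_mul Complex.I_ne_zero hwne ?_, Complex.log_I]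
    · push_cast; ring_nf
    · rw [Complex.arg_I]
      constructor
      · cases abs_lt.mp hargw; linarith
      · cases abs_lt.mp hargw; linarith
  rw [Complex.cpow_def_of_ne_zero (neg_ne_zero.mpr hIw), Complex.cpow_def_of_ne_zero hIw,
    Complex.cpow_def_of_ne_zero hwne, hlog1, hlog2]
  have hE : Complex.exp (Complex.log w * (2*z)) ≠ 0 := Complex.exp_ne_zero _
  rw [← add_div, div_eq_div_iff (by simpa using hzne) (mul_ne_zero hzne hE)]
  rw [Complex.cos]
  have e1 : Complex.exp ((-(↑(π/2) * Complex.I) + Complex.log w) * -(2*z)) *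
      Complex.exp (Complex.log w * (2*z)) = Complex.exp (↑π * z * Complex.I) := by
    rw [← Complex.exp_add]; congr 1; push_cast; ring
  have e2 : Complex.exp ((↑(π/2) * Complex.I + Complex.log w) * -(2*z)) *
      Complex.exp (Complex.log w * (2*z)) = Complex.exp (-(↑π * z) * Complex.I) := by
    rw [← Complex.exp_add]; congr 1; push_cast; ring
  linear_combination z * e1 + z * e2
end
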